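/- Let g_1, …, g_k be pairwise distinct monic irreducible polynomials in F_q[X] with g_i(0) ≠ 0, let b_1, …, b_k ≥ 1, and let s = s_1 + s_2 + ⋯ + s_k where s_i ∈ Ω(g_i^{b_i}) has least period e_i (with the least period of the zero sequence taken to be 1). Then the least period of s equals lcm(e_1, e_2, …, e_k). -/

import Mathlib

open Polynomial

/-- The (left) shift operator `L` on sequences over `F`, as an `F`-linear endomorphism. -/
def shiftL (F : Type*) [CommSemiring F] : Module.End F (ℕ → F) where
  toFun s := fun i => s (i + 1)
  map_add' _ _ := rfl
  map_smul' _ _ := rfl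

/-- For a polynomial `f`, the operator `f(L)` on sequences. -/
noncomputable def polyL {F : Type*} [CommSemiring F] (f : Polynomial F) :
    Module.End F (ℕ → F) :=
  Polynomial.aeval (shiftL F) f

/-- `Ω(f)`: the set of sequences annihilated by `f(L)`. -/
def OmegaSet {F : Type*} [CommSemiring F] (f : Polynomial F) : Set (ℕ → F) :=
  {s | polyL f s = 0}

/-- Two sequences are shift equivalent if one is a shift of the other. -/
def ShiftEquiv {F : Type*} [CommSemiring F] (s s' : ℕ → F) : Prop :=
  ∃ ℓ : ℕ, s' = (shiftL F ^ ℓ) s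

/-- The cycle (shift-equivalence class) of a sequence. -/
def seqCycle {F : Type*} [CommSemiring F] (s : ℕ → F) : Set (ℕ → F) :=
  {s' | ∃ ℓ : ℕ, s' = (shiftL F ^ ℓ) s}

/-- `N` is the least period of the sequence `s`. -/
def IsLeastPeriod {F : Type*} (s : ℕ → F) (N : ℕ) : Prop :=
  0 < N ∧ (∀ i, s (i + N) = s i) ∧ ∀ M : ℕ, 0 < M → (∀ i, s (i + M) = s i) → N ≤ M

/-- `h` is the minimal polynomial of the sequence `s`: it is monic, annihilates `s`,
and divides every polynomial annihilating `s`. -/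
def IsMinPolyOfSeq {F : Type*} [CommSemiring F] (s : ℕ → F) (h : Polynomial F) : Prop :=
  h.Monic ∧ polyL h s = 0 ∧ ∀ h' : Polynomial F, polyL h' s = 0 → h ∣ h'

/-- `e = ord(f)`: the least `N ≥ 1` with `f ∣ X^N - 1`. -/
def IsOrderOf {F : Type*} [CommRing F] (f : Polynomial F) (e : ℕ) : Prop :=
  0 < e ∧ f ∣ X ^ e - 1 ∧ ∀ N : ℕ, 0 < N → f ∣ X ^ N - 1 → e ≤ N

section Aux

variable {F : Type*} [CommRing F]

lemma shiftL_pow_apply (N : ℕ) (s : ℕ → F) : (shiftL F ^ N) s = fun i => s (i + N) := by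
  induction N with
  | zero => simp [shiftL]
  | succ n ih =>
    rw [pow_succ', Module.End.mul_apply, ih]
    funext i
    show s (i + 1 + n) = s (i + (n + 1))
    congr 1
    omega

lemma polyL_mul (f h : Polynomial F) (s : ℕ → F) :
    polyL (f * h) s = polyL f (polyL h s) := by
  simp [polyL, map_mul, Module.End.mul_apply]

lemma polyL_X_pow_sub_one (N : ℕ) (s : ℕ → F) :
    polyL (X ^ N - 1 : Polynomial F) s = 0 ↔ ∀ i, s (i + N) = s i := by
  have h : polyL (X ^ N - 1 : Polynomial F) s = (fun i => s (i + N)) - s := by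
    simp only [polyL, map_sub, map_pow, map_one, aeval_X, LinearMap.sub_apply,
      Module.End.one_apply, shiftL_pow_apply]
  rw [h, sub_eq_zero]
  constructor
  · intro h i; exact congrFun h i
  · intro h; funext i; exact h i

lemma period_mul (s : ℕ → F) (N : ℕ) (h : ∀ i, s (i + N) = s i) (k : ℕ) :
    ∀ i, s (i + N * k) = s i := by
  induction k with
  | zero => simp
  | succ n ih =>
    intro i
    have h2 : i + N * (n + 1) = (i + N * n) + N := by ring
    rw [h2, h, ih]

lemma leastPeriod_dvd (s : ℕ → F) (N : ℕ) (hN : IsLeastPeriod s N) (M : ℕ) (hM : 0 < M)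
    (hper : ∀ i, s (i + M) = s i) : N ∣ M := by
  obtain ⟨hN0, hNper, hNmin⟩ := hN
  have hr : ∀ i, s (i + M % N) = s i := by
    intro i
    have h1 : s (i + M % N + N * (M / N)) = s (i + M % N) :=
      period_mul s N hNper (M / N) _
    have h2 : i + M % N + N * (M / N) = i + M := by
      rw [add_assoc]; congr 1
      rw [Nat.mod_add_div]
    rw [h2] at h1
    rw [← h1, hper]
  rcases Nat.eq_zero_or_pos (M % N) with h0 | hpos
  · exact Nat.dvd_of_mod_eq_zero h0
  · have ha := hNmin (M % N) hpos hr
    have hb := Nat.mod_lt M hN0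
    omega

lemma period_of_dvd (s : ℕ → F) (N M : ℕ) (h : ∀ i, s (i + N) = s i) (hd : N ∣ M) :
    ∀ i, s (i + M) = s i := by
  obtain ⟨c, rfl⟩ := hd
  exact period_mul s N h c

/-- Independence: if sequences annihilated by pairwise coprime polynomials sum to zero,
each is zero. -/
lemma indep {F : Type*} [Field F] {k : ℕ} (f : Fin k → Polynomial F)
    (hcop : Pairwise fun i j => IsCoprime (f i) (f j))
    (t : Fin k → ℕ → F) (ht : ∀ i, polyL (f i) (t i) = 0)
    (hsum : ∑ i, t i = 0) : ∀ j, t j = 0 := by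
  intro j
  set P : Polynomial F := ∏ i ∈ Finset.univ.erase j, f i with hP
  have hc : IsCoprime (f j) P := by
    apply IsCoprime.prod_right
    intro i hi
    exact hcop (Finset.ne_of_mem_erase hi).symm
  obtain ⟨a, c, hac⟩ := hc
  have hPtj : polyL P (t j) = 0 := by
    have hjt : t j = - ∑ i ∈ Finset.univ.erase j, t i := by
      have hh := Finset.add_sum_erase Finset.univ t (Finset.mem_univ j)
      rw [hsum] at hh
      exact eq_neg_of_add_eq_zero_left hh
    rw [hjt, map_neg, map_sum, neg_eq_zero]
    apply Finset.sum_eq_zero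
    intro i hi
    obtain ⟨d, hd⟩ := Finset.dvd_prod_of_mem f hi
    rw [← hP] at hd
    rw [hd, mul_comm, polyL_mul, ht i, map_zero]
  calc t j = polyL 1 (t j) := by simp [polyL]
    _ = polyL (a * f j + c * P) (t j) := by rw [hac]
    _ = polyL a (polyL (f j) (t j)) + polyL c (polyL P (t j)) := by
        simp only [polyL, map_add, map_mul, LinearMap.add_apply, Module.End.mul_apply]
    _ = 0 := by rw [ht j, hPtj, map_zero, map_zero, add_zero]

end Aux

/-- if `s = s₁ + ⋯ + s_k` with `sᵢ ∈ Ω(gᵢ^{bᵢ})` of least period `eᵢ`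
(the least period of the zero sequence being `1`), then the least period of `s`
is `lcm(e₁, …, e_k)`. -/
theorem stmt3 {F : Type*} [Field F] [Fintype F] (k : ℕ)
    (g : Fin k → Polynomial F) (b : Fin k → ℕ)
    (hmonic : ∀ i, (g i).Monic) (hirr : ∀ i, Irreducible (g i))
    (hg0 : ∀ i, (g i).coeff 0 ≠ 0) (hdist : Function.Injective g)
    (hb : ∀ i, 1 ≤ b i)
    (s : Fin k → (ℕ → F)) (hs : ∀ i, s i ∈ OmegaSet ((g i) ^ (b i)))
    (e : Fin k → ℕ) (he : ∀ i, IsLeastPeriod (s i) (e i)) :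
    IsLeastPeriod (∑ i, s i) (Finset.univ.lcm e) := by
  set E := Finset.univ.lcm e with hE
  have hEpos : 0 < E := by
    apply Nat.pos_of_ne_zero
    intro h0
    rw [hE] at h0
    rcases Finset.lcm_eq_zero_iff.1 h0 with ⟨i, _, hi⟩
    have := (he i).1
    omega
  have hcop : Pairwise fun i j => IsCoprime ((g i) ^ (b i)) ((g j) ^ (b j)) := by
    intro i j hij
    apply IsCoprime.pow
    rcases (hirr i).isCoprime_or_dvd (g j) with h | h
    · exact h
    · exfalso
      have hassoc : Associated (g i) (g j) := (hirr i).associated_of_dvd (hirr j) h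
      exact hij (hdist (Polynomial.eq_of_monic_of_associated (hmonic i) (hmonic j) hassoc))
  refine ⟨hEpos, ?_, ?_⟩
  · intro i0
    rw [Finset.sum_apply, Finset.sum_apply]
    apply Finset.sum_congr rfl
    intro i _
    exact period_of_dvd (s i) (e i) E (he i).2.1 (Finset.dvd_lcm (Finset.mem_univ i)) i0
  · intro M hM hMper
    have hsumM : polyL (X ^ M - 1 : Polynomial F) (∑ i, s i) = 0 :=
      (polyL_X_pow_sub_one M _).2 hMper
    set t : Fin k → ℕ → F := fun i => polyL (X ^ M - 1 : Polynomial F) (s i) with htdef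
    have ht : ∀ i, polyL ((g i) ^ (b i)) (t i) = 0 := by
      intro i
      show polyL ((g i) ^ (b i)) (polyL (X ^ M - 1) (s i)) = 0
      rw [← polyL_mul, mul_comm, polyL_mul, hs i, map_zero]
    have hsum0 : ∑ i, t i = 0 := by
      rw [htdef, ← map_sum, hsumM]
    have hti : ∀ i, t i = 0 := indep _ hcop t ht hsum0
    have hper : ∀ i, ∀ i0, (s i) (i0 + M) = (s i) i0 := by
      intro i
      exact (polyL_X_pow_sub_one M (s i)).1 (hti i)
    have hdvd : E ∣ M := by
      rw [hE]
      apply Finset.lcm_dvd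
      intro i _
      exact leastPeriod_dvd (s i) (e i) (he i) M hM (hper i)
    exact Nat.le_of_dvd hM hdvd
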